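/- Let d ≥ 1, T > 0, δ ∈ (0, T], λ > 0. Let Σ_μ, Σ_R, Σ̄_J ∈ ℝ^{d×d} be symmetric positive definite, κ ∈ ℝ^{d×d} be positive definite, and q₀ ∈ ℝ^{d×d} be symmetric positive semidefinite. Suppose Q : [0, T] → ℝ^{d×d} is differentiable with Q(0) = q₀, Q(t) symmetric positive semidefinite for every t ∈ [0, T], and Q'(t) = Σ_μ − κ Q(t) − Q(t) κᵀ − Q(t)(Σ_R^{-1} + λ·Σ̄_J^{-1}) Q(t) for all t ∈ [0, T]. Assume moreover that C_F > 0 satisfies ‖Q(t)‖_F ≤ C_F for all t ∈ [0, T]. Then for every real p ≥ 1, ‖Q(t)‖_F^p ≤ C_J · C_F^{p−1} / √λ for all t ∈ [δ, T], where C_J = √( d·tr(Σ̄_J)·( tr(Σ_μ) + tr(q₀)/(e·δ) ) ) and e = exp(1). -/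

import Mathlib

open Matrix Real Set

section MatrixAux
variable {d : ℕ}

section SqrtAux
open scoped MatrixOrder

lemma Matrix.posSemidef_iff_eq_transpose_mul_self {M : Matrix (Fin d) (Fin d) ℝ} :
    M.PosSemidef ↔ ∃ B : Matrix (Fin d) (Fin d) ℝ, M = Bᴴ * B := by
  constructor
  · intro hM
    obtain ⟨B, hB⟩ := CStarAlgebra.nonneg_iff_eq_star_mul_self.mp hM.nonneg
    exact ⟨B, hB⟩
  · rintro ⟨B, rfl⟩
    exact posSemidef_conjTranspose_mul_self B

end SqrtAux

lemma myTrace_nonneg {M : Matrix (Fin d) (Fin d) ℝ} (hM : M.PosSemidef) : 0 ≤ M.trace := by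
  obtain ⟨B, rfl⟩ := Matrix.posSemidef_iff_eq_transpose_mul_self.mp hM
  simp only [Matrix.trace, Matrix.diag, Matrix.mul_apply, Matrix.conjTranspose_apply,
    star_trivial]
  exact Finset.sum_nonneg fun i _ => Finset.sum_nonneg fun j _ => mul_self_nonneg _

lemma myForm_nonneg {M : Matrix (Fin d) (Fin d) ℝ} (hM : M.PosSemidef) (x : Fin d → ℝ) :
    0 ≤ x ⬝ᵥ M *ᵥ x := by
  simpa using hM.dotProduct_mulVec_nonneg x

lemma myForm_CS {M : Matrix (Fin d) (Fin d) ℝ} (hM : M.PosSemidef) (x y : Fin d → ℝ) :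
    (x ⬝ᵥ M *ᵥ y) ^ 2 ≤ (x ⬝ᵥ M *ᵥ x) * (y ⬝ᵥ M *ᵥ y) := by
  obtain ⟨B, rfl⟩ := Matrix.posSemidef_iff_eq_transpose_mul_self.mp hM
  have key : ∀ u v : Fin d → ℝ, u ⬝ᵥ (Bᴴ * B) *ᵥ v = (B *ᵥ u) ⬝ᵥ (B *ᵥ v) := by
    intro u v
    have hBt : Bᴴ = Bᵀ := by ext i j; simp [Matrix.conjTranspose_apply]
    rw [← Matrix.mulVec_mulVec, hBt, Matrix.dotProduct_mulVec, Matrix.vecMul_transpose]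
  rw [key, key, key]
  simpa [dotProduct, pow_two] using
    Finset.sum_mul_sq_le_sq_mul_sq Finset.univ (B *ᵥ x) (B *ᵥ y)

lemma myForm_le_trace {M : Matrix (Fin d) (Fin d) ℝ} (hM : M.PosSemidef) (x : Fin d → ℝ) :
    x ⬝ᵥ M *ᵥ x ≤ M.trace * (x ⬝ᵥ x) := by
  obtain ⟨B, rfl⟩ := Matrix.posSemidef_iff_eq_transpose_mul_self.mp hM
  have hBt : Bᴴ = Bᵀ := by ext i j; simp [Matrix.conjTranspose_apply]
  have key : x ⬝ᵥ (Bᴴ * B) *ᵥ x = ∑ i, ((B *ᵥ x) i) ^ 2 := by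
    rw [← Matrix.mulVec_mulVec, hBt, Matrix.dotProduct_mulVec, Matrix.vecMul_transpose]
    simp [dotProduct, pow_two]
  have htr : (Bᴴ * B).trace = ∑ i, ∑ j, (B i j) ^ 2 := by
    rw [hBt]
    rw [Finset.sum_comm (s := Finset.univ) (t := Finset.univ) (f := fun i j => (B i j)^2)]
    simp [Matrix.trace, Matrix.diag, Matrix.mul_apply, pow_two]
  rw [key, htr, Finset.sum_mul]
  apply Finset.sum_le_sum
  intro i _
  have := Finset.sum_mul_sq_le_sq_mul_sq Finset.univ (fun j => B i j) x
  simpa [Matrix.mulVec, dotProduct, pow_two] using this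

lemma myInvForm {S : Matrix (Fin d) (Fin d) ℝ} (hS : S.PosDef) (x : Fin d → ℝ) :
    x ⬝ᵥ x ≤ S.trace * (x ⬝ᵥ S⁻¹ *ᵥ x) := by
  have hdet : IsUnit S.det := isUnit_iff_ne_zero.mpr hS.det_pos.ne'
  have hxy : S *ᵥ (S⁻¹ *ᵥ x) = x := by
    rw [Matrix.mulVec_mulVec, Matrix.mul_nonsing_inv _ hdet, Matrix.one_mulVec]
  have h2 : (S⁻¹ *ᵥ x) ⬝ᵥ S *ᵥ (S⁻¹ *ᵥ x) = x ⬝ᵥ S⁻¹ *ᵥ x := by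
    rw [hxy, dotProduct_comm]
  have hn : 0 ≤ x ⬝ᵥ x := by
    simp only [dotProduct]
    exact Finset.sum_nonneg fun i _ => mul_self_nonneg _
  rcases eq_or_lt_of_le hn with h0 | h0
  · have hx0 : x = 0 := (dotProduct_self_eq_zero (v := x)).mp h0.symm
    subst hx0
    simp
  · have hCS : (x ⬝ᵥ S *ᵥ (S⁻¹ *ᵥ x)) ^ 2 ≤
        (x ⬝ᵥ S *ᵥ x) * ((S⁻¹ *ᵥ x) ⬝ᵥ S *ᵥ (S⁻¹ *ᵥ x)) :=
      myForm_CS hS.posSemidef x (S⁻¹ *ᵥ x)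
    rw [h2, hxy] at hCS
    have h4 : (x ⬝ᵥ x) * (x ⬝ᵥ x) ≤ (S.trace * (x ⬝ᵥ S⁻¹ *ᵥ x)) * (x ⬝ᵥ x) := by
      calc (x ⬝ᵥ x) * (x ⬝ᵥ x) = (x ⬝ᵥ x) ^ 2 := (pow_two _).symm
        _ ≤ (x ⬝ᵥ S *ᵥ x) * (x ⬝ᵥ S⁻¹ *ᵥ x) := hCS
        _ ≤ (S.trace * (x ⬝ᵥ x)) * (x ⬝ᵥ S⁻¹ *ᵥ x) :=
            mul_le_mul_of_nonneg_right (myForm_le_trace hS.posSemidef x)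
              (myForm_nonneg hS.inv.posSemidef x)
        _ = (S.trace * (x ⬝ᵥ S⁻¹ *ᵥ x)) * (x ⬝ᵥ x) := by ring
    exact le_of_mul_le_mul_right h4 h0

lemma myKappaForm_nonneg {κ : Matrix (Fin d) (Fin d) ℝ}
    (hκ : ∀ x : Fin d → ℝ, x ≠ 0 → 0 < x ⬝ᵥ (κ *ᵥ x)) (x : Fin d → ℝ) :
    0 ≤ x ⬝ᵥ κ *ᵥ x := by
  rcases eq_or_ne x 0 with rfl | hx
  · simp
  · exact (hκ x hx).le

lemma myTrace_kappa_nonneg {κ Q : Matrix (Fin d) (Fin d) ℝ}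
    (hκ : ∀ x : Fin d → ℝ, x ≠ 0 → 0 < x ⬝ᵥ (κ *ᵥ x)) (hQ : Q.PosSemidef) :
    0 ≤ (κ * Q).trace := by
  obtain ⟨B, rfl⟩ := Matrix.posSemidef_iff_eq_transpose_mul_self.mp hQ
  have hBt : Bᴴ = Bᵀ := by ext i j; simp [Matrix.conjTranspose_apply]
  rw [hBt, ← Matrix.mul_assoc, Matrix.trace_mul_comm]
  have hdiag : ∀ i, (B * (κ * Bᵀ)) i i =
      (fun j => B i j) ⬝ᵥ κ *ᵥ (fun j => B i j) := by
    intro i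
    simp [Matrix.mul_apply, Matrix.mulVec, dotProduct, Matrix.transpose_apply]
  rw [Matrix.trace, ← Matrix.mul_assoc]
  have : ∀ i, (B * κ * Bᵀ).diag i = (B * (κ * Bᵀ)) i i := by
    intro i; rw [Matrix.mul_assoc]; rfl
  rw [Finset.sum_congr rfl fun i _ => (this i).trans (hdiag i)]
  exact Finset.sum_nonneg fun i _ => myKappaForm_nonneg hκ _

lemma myTrace_kappaT_nonneg {κ Q : Matrix (Fin d) (Fin d) ℝ}
    (hκ : ∀ x : Fin d → ℝ, x ≠ 0 → 0 < x ⬝ᵥ (κ *ᵥ x)) (hQ : Q.PosSemidef) :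
    0 ≤ (Q * κᵀ).trace := by
  rw [Matrix.trace_mul_comm]
  refine myTrace_kappa_nonneg (κ := κᵀ) ?_ hQ
  intro x hx
  have : x ⬝ᵥ κᵀ *ᵥ x = x ⬝ᵥ κ *ᵥ x := by
    rw [Matrix.mulVec_transpose, dotProduct_comm, ← Matrix.dotProduct_mulVec]
  rw [this]
  exact hκ x hx

lemma myTrace_QMQ_nonneg {M Q : Matrix (Fin d) (Fin d) ℝ}
    (hM : M.PosSemidef) (hQ : Q.PosSemidef) : 0 ≤ (Q * M * Q).trace := by
  have h : Q * M * Q = Qᴴ * M * Q := by rw [hQ.1]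
  rw [h]
  exact myTrace_nonneg (hM.conjTranspose_mul_mul_same Q)

lemma myTraceQQ_le {S Q : Matrix (Fin d) (Fin d) ℝ} (hS : S.PosDef) (hQ : Q.PosSemidef) :
    (Q * Q).trace ≤ S.trace * (Q * S⁻¹ * Q).trace := by
  have hQs : ∀ a b, Q b a = Q a b := by
    intro a b
    have := hQ.1.apply a b
    simpa using this
  have hd1 : ∀ i, (Q * Q) i i = (fun j => Q i j) ⬝ᵥ (fun j => Q i j) := by
    intro i
    simp only [Matrix.mul_apply, dotProduct]
    exact Finset.sum_congr rfl fun j _ => by rw [hQs i j]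
  have hd2 : ∀ i, (Q * S⁻¹ * Q) i i = (fun j => Q i j) ⬝ᵥ S⁻¹ *ᵥ (fun j => Q i j) := by
    intro i
    simp only [Matrix.mul_apply, Matrix.mulVec, dotProduct]
    simp_rw [Finset.sum_mul, Finset.mul_sum]
    rw [Finset.sum_comm]
    exact Finset.sum_congr rfl fun j _ => Finset.sum_congr rfl fun k _ => by
      rw [hQs i k]; ring
  have htr1 : (Q * Q).trace = ∑ i, (fun j => Q i j) ⬝ᵥ (fun j => Q i j) :=
    Finset.sum_congr rfl fun i _ => hd1 i
  have htr2 : (Q * S⁻¹ * Q).trace = ∑ i, (fun j => Q i j) ⬝ᵥ S⁻¹ *ᵥ (fun j => Q i j) :=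
    Finset.sum_congr rfl fun i _ => hd2 i
  rw [htr1, htr2, Finset.mul_sum]
  exact Finset.sum_le_sum fun i _ => myInvForm hS _

lemma myEntry_sq {Q : Matrix (Fin d) (Fin d) ℝ} (hQ : Q.PosSemidef) (i j : Fin d) :
    (Q i j) ^ 2 ≤ Q i i * Q j j := by
  have := myForm_CS hQ (Pi.single i 1) (Pi.single j 1)
  simpa [Matrix.mulVec_single, single_dotProduct] using this

lemma myFrobSq_le_trace_sq {Q : Matrix (Fin d) (Fin d) ℝ} (hQ : Q.PosSemidef) :
    ∑ i, ∑ j, (Q i j) ^ 2 ≤ Q.trace ^ 2 := by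
  simp only [Matrix.trace, Matrix.diag, pow_two]
  rw [Finset.sum_mul_sum]
  exact Finset.sum_le_sum fun i _ => Finset.sum_le_sum fun j _ => by
    have := myEntry_sq hQ i j; rw [pow_two] at this
    simpa using this

lemma myTrace_sq_le {Q : Matrix (Fin d) (Fin d) ℝ} (hQ : Q.PosSemidef) :
    Q.trace ^ 2 ≤ (d : ℝ) * (Q * Q).trace := by
  have h1 : Q.trace ^ 2 ≤ (d : ℝ) * ∑ i, (Q i i) ^ 2 := by
    have := sq_sum_le_card_mul_sum_sq (s := (Finset.univ : Finset (Fin d)))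
      (f := fun i => Q i i)
    simpa [Matrix.trace, Matrix.diag] using this
  refine h1.trans (mul_le_mul_of_nonneg_left ?_ (Nat.cast_nonneg d))
  have hQs : ∀ a b, Q b a = Q a b := by
    intro a b; have := hQ.1.apply a b; simpa using this
  apply Finset.sum_le_sum
  intro i _
  show Q i i ^ 2 ≤ (Q * Q) i i
  have : (Q * Q) i i = ∑ j, (Q i j) ^ 2 := by
    simp only [Matrix.mul_apply]
    exact Finset.sum_congr rfl fun j _ => by rw [hQs i j, pow_two]
  rw [this]
  exact Finset.single_le_sum (f := fun j => (Q i j) ^ 2) (fun j _ => sq_nonneg _) (Finset.mem_univ i)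

lemma ode_comparison (T δ a c f0 : ℝ) (f g : ℝ → ℝ)
    (hδ0 : 0 < δ) (hδT : δ ≤ T) (ha : 0 < a) (hc : 0 < c)
    (hf0 : f 0 = f0) (hf00 : 0 ≤ f0)
    (hfnn : ∀ s ∈ Icc (0:ℝ) T, 0 ≤ f s)
    (hderiv : ∀ s ∈ Icc (0:ℝ) T, HasDerivAt f (g s) s)
    (hg : ∀ s ∈ Icc (0:ℝ) T, g s ≤ a - c * (f s) ^ 2) :
    ∀ t ∈ Icc δ T, f t ≤ Real.sqrt ((a + f0 / (Real.exp 1 * δ)) / c) := by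
  have he1 : (0:ℝ) < Real.exp 1 := Real.exp_pos 1
  have hf0δ : 0 ≤ f0 / (Real.exp 1 * δ) := div_nonneg hf00 (by positivity)
  have harg : 0 < (a + f0 / (Real.exp 1 * δ)) / c := by positivity
  set B := Real.sqrt ((a + f0 / (Real.exp 1 * δ)) / c) with hBdef
  have hB0 : 0 < B := Real.sqrt_pos.mpr harg
  have hB2 : B ^ 2 = (a + f0 / (Real.exp 1 * δ)) / c := Real.sq_sqrt harg.le
  have hcB2 : c * B ^ 2 = a + f0 / (Real.exp 1 * δ) := by
    rw [hB2]; field_simp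
  intro t ht
  obtain ⟨hδt, htT⟩ := ht
  have ht0 : 0 < t := lt_of_lt_of_le hδ0 hδt
  have hsub : Icc (0:ℝ) t ⊆ Icc 0 T := Icc_subset_Icc le_rfl htT
  by_cases hall : ∀ s ∈ Icc (0:ℝ) t, B < f s
  · -- f stays above B on [0,t]: linear comparison
    set k := c * B with hk
    have hk0 : 0 < k := mul_pos hc hB0
    set y : ℝ → ℝ := fun s => (f s - a / k) * Real.exp (k * s) with hy
    have hyd : ∀ s ∈ Icc (0:ℝ) t,
        HasDerivAt y ((g s + k * f s - a) * Real.exp (k * s)) s := by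
      intro s hs
      have h1 : HasDerivAt (fun u => f u - a / k) (g s) s :=
        (hderiv s (hsub hs)).sub_const _
      have h2 : HasDerivAt (fun u => Real.exp (k * u)) (Real.exp (k * s) * k) s := by
        simpa using ((hasDerivAt_id s).const_mul k).exp
      have h3 := h1.mul h2
      refine h3.congr_deriv ?_
      have hkne : k ≠ 0 := hk0.ne'
      linear_combination (-Real.exp (k * s)) * (div_mul_cancel₀ a hkne)
    have hmono : AntitoneOn y (Icc 0 t) := by
      apply antitoneOn_of_deriv_nonpos (convex_Icc 0 t)
      · exact fun s hs => (hyd s hs).continuousAt.continuousWithinAt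
      · intro s hs
        rw [interior_Icc] at hs
        exact ((hyd s (Ioo_subset_Icc_self hs)).differentiableAt).differentiableWithinAt
      · intro s hs
        rw [interior_Icc] at hs
        have hs' : s ∈ Icc (0:ℝ) t := Ioo_subset_Icc_self hs
        rw [(hyd s hs').deriv]
        have hfs := hall s hs'
        have hgs := hg s (hsub hs')
        have hfsnn := hfnn s (hsub hs')
        have h4 : g s + k * f s - a ≤ 0 := by
          have h3 : k * f s ≤ c * f s ^ 2 := by
            have he : k * f s = c * (B * f s) := by rw [hk]; ring
            rw [he, pow_two]
            exact mul_le_mul_of_nonneg_left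
              (mul_le_mul_of_nonneg_right hfs.le hfsnn) hc.le
          linarith
        exact mul_nonpos_of_nonpos_of_nonneg h4 (Real.exp_pos _).le
    have hyt : y t ≤ y 0 :=
      hmono (left_mem_Icc.mpr ht0.le) (right_mem_Icc.mpr ht0.le) ht0.le
    have h5 : (f t - a / k) * Real.exp (k * t) ≤ f0 - a / k := by
      simpa [hy, hf0] using hyt
    have hE : (0:ℝ) < Real.exp (k * t) := Real.exp_pos _
    have hak : 0 ≤ a / k := div_nonneg ha.le hk0.le
    have h6 : f t ≤ a / k + f0 / Real.exp (k * t) := by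
      have h61 : f t - a / k ≤ (f0 - a / k) / Real.exp (k * t) :=
        (le_div_iff₀ hE).mpr h5
      have h62 : (f0 - a / k) / Real.exp (k * t) ≤ f0 / Real.exp (k * t) := by
        rw [div_le_div_iff₀ hE hE]
        nlinarith [hak, hE]
      linarith
    have h7 : B * f t ≤ a / c + f0 * (B / Real.exp (k * t)) := by
      calc B * f t ≤ B * (a / k + f0 / Real.exp (k * t)) :=
            mul_le_mul_of_nonneg_left h6 hB0.le
        _ = a / c + f0 * (B / Real.exp (k * t)) := by
            rw [hk]; field_simp
    have h9 : k * t * Real.exp 1 ≤ Real.exp (k * t) := by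
      have h10 := Real.add_one_le_exp (k * t - 1)
      have h11 : k * t ≤ Real.exp (k * t - 1) := by linarith
      calc k * t * Real.exp 1 ≤ Real.exp (k * t - 1) * Real.exp 1 :=
            mul_le_mul_of_nonneg_right h11 he1.le
        _ = Real.exp (k * t) := by rw [← Real.exp_add]; ring_nf
    have h8 : B / Real.exp (k * t) ≤ 1 / (Real.exp 1 * c * t) := by
      have hktE : 0 < k * t * Real.exp 1 := by positivity
      have h81 : B / Real.exp (k * t) ≤ B / (k * t * Real.exp 1) :=
        div_le_div_of_nonneg_left hB0.le hktE h9
      have h82 : B / (k * t * Real.exp 1) = 1 / (Real.exp 1 * c * t) := by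
        rw [hk]; field_simp
      rw [h82] at h81; exact h81
    have h8' : 1 / (Real.exp 1 * c * t) ≤ 1 / (Real.exp 1 * c * δ) := by
      apply one_div_le_one_div_of_le (by positivity)
      have : Real.exp 1 * c * δ ≤ Real.exp 1 * c * t :=
        mul_le_mul_of_nonneg_left hδt (by positivity)
      exact this
    have h9' : B * f t ≤ B ^ 2 := by
      have h91 : f0 * (B / Real.exp (k * t)) ≤ f0 * (1 / (Real.exp 1 * c * δ)) :=
        mul_le_mul_of_nonneg_left (h8.trans h8') hf00
      have h92 : a / c + f0 * (1 / (Real.exp 1 * c * δ)) = B ^ 2 := by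
        rw [hB2]; field_simp
      linarith
    rw [pow_two] at h9'
    exact le_of_mul_le_mul_left h9' hB0
  · -- f dips below B before t
    push_neg at hall
    obtain ⟨s0, hs0, hfs0⟩ := hall
    set S : Set ℝ := {s | s ∈ Icc (0:ℝ) t ∧ f s ≤ B} with hS
    have hSne : S.Nonempty := ⟨s0, hs0, hfs0⟩
    have hScl : IsClosed S := by
      apply IsSeqClosed.isClosed
      intro x u hx hu
      have hu1 : u ∈ Icc (0:ℝ) t := isClosed_Icc.isSeqClosed (fun n => (hx n).1) hu
      refine ⟨hu1, ?_⟩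
      have hcont : ContinuousAt f u := (hderiv u (hsub hu1)).continuousAt
      have htend : Filter.Tendsto (fun n => f (x n)) Filter.atTop (nhds (f u)) :=
        (hcont.tendsto).comp hu
      exact le_of_tendsto htend (Filter.Eventually.of_forall fun n => (hx n).2)
    have hScomp : IsCompact S :=
      isCompact_Icc.of_isClosed_subset hScl (fun s hs => hs.1)
    have hmS : sSup S ∈ S := hScomp.sSup_mem hSne
    set m := sSup S with hm
    rcases eq_or_lt_of_le hmS.1.2 with heq | hlt
    · rw [← heq]; exact hmS.2
    · have hant : AntitoneOn f (Icc m t) := by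
        apply antitoneOn_of_deriv_nonpos (convex_Icc m t)
        · intro s hs
          exact (hderiv s ⟨hmS.1.1.trans hs.1, hs.2.trans htT⟩).continuousAt.continuousWithinAt
        · intro s hs
          rw [interior_Icc] at hs
          exact (hderiv s ⟨hmS.1.1.trans hs.1.le,
            hs.2.le.trans htT⟩).differentiableAt.differentiableWithinAt
        · intro s hs
          rw [interior_Icc] at hs
          have hsT : s ∈ Icc (0:ℝ) T := ⟨hmS.1.1.trans hs.1.le, hs.2.le.trans htT⟩
          rw [(hderiv s hsT).deriv]
          have hfsB : B ≤ f s := by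
            by_contra hcon
            push_neg at hcon
            have hsS : s ∈ S := ⟨⟨hmS.1.1.trans hs.1.le, hs.2.le⟩, hcon.le⟩
            have hSbdd : BddAbove S := ⟨t, fun u hu => hu.1.2⟩
            exact absurd (le_csSup hSbdd hsS) (not_le.mpr hs.1)
          have hgs := hg s hsT
          have hq : B ^ 2 ≤ f s ^ 2 := pow_le_pow_left₀ hB0.le hfsB 2
          have hO : a - c * B ^ 2 ≤ 0 := by
            rw [hcB2]; linarith
          nlinarith
      have := hant (left_mem_Icc.mpr hlt.le) (right_mem_Icc.mpr hlt.le) hlt.le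
      exact this.trans hmS.2

lemma myTrace_pos {M : Matrix (Fin d) (Fin d) ℝ} (hd : 1 ≤ d) (hM : M.PosDef) :
    0 < M.trace := by
  have hne : (Finset.univ : Finset (Fin d)).Nonempty := by
    refine ⟨⟨0, hd⟩, Finset.mem_univ _⟩
  apply Finset.sum_pos ?_ hne
  intro i _
  have hx : (Pi.single i 1 : Fin d → ℝ) ≠ 0 := by
    intro h
    have := congrFun h i
    simp at this
  have := hM.dotProduct_mulVec_pos hx
  simpa [Matrix.mulVec_single, single_dotProduct] using this


/-- bound on powers of the Frobenius norm of the conditional covariance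
of the `J`-investor. -/
theorem frobenius_Q_J_bound
    (d : ℕ) (hd : 1 ≤ d)
    (T δ lam : ℝ) (hT : 0 < T) (hδ0 : 0 < δ) (hδT : δ ≤ T) (hlam : 0 < lam)
    (Sμ SR SJ κ q₀ : Matrix (Fin d) (Fin d) ℝ)
    (hSμ : Sμ.PosDef) (hSR : SR.PosDef) (hSJ : SJ.PosDef)
    (hκ : ∀ x : Fin d → ℝ, x ≠ 0 → 0 < x ⬝ᵥ (κ *ᵥ x))
    (hq₀ : q₀.PosSemidef)
    (Q : ℝ → Matrix (Fin d) (Fin d) ℝ)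
    (hQ0 : Q 0 = q₀)
    (hQpsd : ∀ t ∈ Icc (0 : ℝ) T, (Q t).PosSemidef)
    (hQdiff : ∀ t ∈ Icc (0 : ℝ) T, ∀ i j : Fin d,
      HasDerivAt (fun s => Q s i j)
        ((Sμ - κ * Q t - Q t * κᵀ - Q t * (SR⁻¹ + lam • SJ⁻¹) * Q t) i j) t)
    (CF : ℝ) (hCF0 : 0 < CF)
    (hCF : ∀ t ∈ Icc (0 : ℝ) T, Real.sqrt (∑ i, ∑ j, (Q t i j) ^ 2) ≤ CF) :
    ∀ p : ℝ, 1 ≤ p → ∀ t ∈ Icc δ T,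
      (Real.sqrt (∑ i, ∑ j, (Q t i j) ^ 2)) ^ p ≤
        Real.sqrt ((d : ℝ) * SJ.trace *
          (Sμ.trace + q₀.trace / (Real.exp 1 * δ))) * CF ^ (p - 1) / Real.sqrt lam := by
  have hd0 : (0:ℝ) < d := by exact_mod_cast hd
  set a := Sμ.trace with ha_def
  set τ := SJ.trace with hτ_def
  have ha : 0 < a := myTrace_pos hd hSμ
  have hτ : 0 < τ := myTrace_pos hd hSJ
  set c := lam / (d * τ) with hc_def
  have hc : 0 < c := by positivity
  set f : ℝ → ℝ := fun s => (Q s).trace with hf_def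
  set g : ℝ → ℝ := fun s =>
    (Sμ - κ * Q s - Q s * κᵀ - Q s * (SR⁻¹ + lam • SJ⁻¹) * Q s).trace with hg_def
  have hderiv : ∀ s ∈ Icc (0:ℝ) T, HasDerivAt f (g s) s := by
    intro s hs
    have := HasDerivAt.fun_sum (u := Finset.univ) fun i _ => hQdiff s hs i i
    simpa [hf_def, hg_def, Matrix.trace, Matrix.diag] using this
  have hgle : ∀ s ∈ Icc (0:ℝ) T, g s ≤ a - c * (f s) ^ 2 := by
    intro s hs
    have hQs := hQpsd s hs
    have hexp : Q s * (SR⁻¹ + lam • SJ⁻¹) * Q s =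
        Q s * SR⁻¹ * Q s + lam • (Q s * SJ⁻¹ * Q s) := by
      rw [Matrix.mul_add, Matrix.add_mul, Matrix.mul_smul, Matrix.smul_mul]
    have htr : g s = a - (κ * Q s).trace - (Q s * κᵀ).trace
        - ((Q s * SR⁻¹ * Q s).trace + lam * (Q s * SJ⁻¹ * Q s).trace) := by
      rw [hg_def]
      simp only [hexp, Matrix.trace_sub, Matrix.trace_add, Matrix.trace_smul, smul_eq_mul]
      rfl
    have h1 : 0 ≤ (κ * Q s).trace := myTrace_kappa_nonneg hκ hQs
    have h2 : 0 ≤ (Q s * κᵀ).trace := myTrace_kappaT_nonneg hκ hQs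
    have h3 : 0 ≤ (Q s * SR⁻¹ * Q s).trace := myTrace_QMQ_nonneg hSR.inv.posSemidef hQs
    have h4 : (f s) ^ 2 ≤ (d : ℝ) * τ * (Q s * SJ⁻¹ * Q s).trace := by
      calc (f s) ^ 2 ≤ (d : ℝ) * (Q s * Q s).trace := myTrace_sq_le hQs
        _ ≤ (d : ℝ) * (τ * (Q s * SJ⁻¹ * Q s).trace) :=
            mul_le_mul_of_nonneg_left (myTraceQQ_le hSJ hQs) hd0.le
        _ = (d : ℝ) * τ * (Q s * SJ⁻¹ * Q s).trace := by ring
    have h5 : c * (f s) ^ 2 ≤ lam * (Q s * SJ⁻¹ * Q s).trace := by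
      rw [hc_def]
      rw [div_mul_eq_mul_div, div_le_iff₀ (by positivity)]
      calc lam * (f s)^2 ≤ lam * ((d : ℝ) * τ * (Q s * SJ⁻¹ * Q s).trace) :=
            mul_le_mul_of_nonneg_left h4 hlam.le
        _ = lam * (Q s * SJ⁻¹ * Q s).trace * ((d:ℝ) * τ) := by ring
    rw [htr]
    linarith
  have hfnn : ∀ s ∈ Icc (0:ℝ) T, 0 ≤ f s := fun s hs => myTrace_nonneg (hQpsd s hs)
  have hf0 : f 0 = q₀.trace := by rw [hf_def]; simp [hQ0]
  have hf00 : 0 ≤ q₀.trace := myTrace_nonneg hq₀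
  have hmain := ode_comparison T δ a c q₀.trace f g hδ0 hδT ha hc hf0 hf00 hfnn hderiv hgle
  intro p hp t ht
  have htT : t ∈ Icc (0:ℝ) T := ⟨hδ0.le.trans ht.1, ht.2⟩
  set N := Real.sqrt (∑ i, ∑ j, (Q t i j) ^ 2) with hN_def
  have hN0 : 0 ≤ N := Real.sqrt_nonneg _
  have hNf : N ≤ f t := by
    have := myFrobSq_le_trace_sq (hQpsd t htT)
    have h := Real.sqrt_le_sqrt this
    rwa [Real.sqrt_sq (hfnn t htT)] at h
  set B := Real.sqrt ((a + q₀.trace / (Real.exp 1 * δ)) / c) with hB_def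
  have hNB : N ≤ B := hNf.trans (hmain t ht)
  have hNCF : N ≤ CF := hCF t htT
  have hBK : B = Real.sqrt ((d : ℝ) * τ *
      (a + q₀.trace / (Real.exp 1 * δ))) / Real.sqrt lam := by
    rw [hB_def, hc_def]
    rw [div_div_eq_mul_div, ← Real.sqrt_div (by positivity)]
    congr 1
    ring
  have hB0 : 0 ≤ B := Real.sqrt_nonneg _
  have hgoal : N ^ p ≤ B * CF ^ (p - 1) := by
    rcases eq_or_lt_of_le hN0 with h0 | h0
    · rw [← h0, Real.zero_rpow (by linarith : p ≠ 0)]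
      positivity
    · have hsplit : N ^ p = N * N ^ (p - 1) := by
        nth_rewrite 1 [show p = 1 + (p - 1) by ring]
        rw [Real.rpow_add h0, Real.rpow_one]
      rw [hsplit]
      exact mul_le_mul hNB
        (Real.rpow_le_rpow hN0 hNCF (by linarith))
        (Real.rpow_nonneg hN0 _) hB0
  calc N ^ p ≤ B * CF ^ (p - 1) := hgoal
    _ = Real.sqrt ((d : ℝ) * τ * (a + q₀.trace / (Real.exp 1 * δ))) * CF ^ (p - 1)
        / Real.sqrt lam := by rw [hBK]; ring
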